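/- Let a, b, c be pairwise distinct real numbers and let γ ≠ 0. Then R_{0,0,γ} = {(0,0,z) : z ∈ ℝ} ∪ {(0, y, γ/(2(b−c))) : y ∈ ℝ} ∪ {(x, 0, γ/(2(a−c))) : x ∈ ℝ}. In particular the two crossing points on the z-axis, namely (0,0,γ/(2(b−c))) and (0,0,γ/(2(a−c))), are distinct. -/

import Mathlib

open Submodule

lemma minor_of_rank_le_one (M : Matrix (Fin 2) (Fin 3) ℝ) (h : M.rank ≤ 1)
    (i j : Fin 3) : M 0 i * M 1 j = M 0 j * M 1 i := by
  have hdep : ¬ LinearIndependent ℝ M := by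
    intro hli
    have h2 := finrank_span_eq_card hli
    rw [Matrix.rank_eq_finrank_span_row] at h
    change Module.finrank ℝ (span ℝ (Set.range M)) ≤ 1 at h
    simp [h2] at h
  have hM : M = ![M 0, M 1] := by
    funext k; exact Fin.cases rfl (fun l => by fin_cases l; rfl) k
  rw [hM, LinearIndependent.pair_iff] at hdep
  push_neg at hdep
  obtain ⟨s, t, hst, hne⟩ := hdep
  have hi := congrFun hst i
  have hj := congrFun hst j
  simp [Pi.add_apply] at hi hj
  rcases eq_or_ne s 0 with hs | hs
  · have ht := hne hs
    have h' : t * (M 0 i * M 1 j - M 0 j * M 1 i) = 0 := by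
      linear_combination M 0 i * hj - M 0 j * hi
    rcases mul_eq_zero.mp h' with h'' | h''
    · exact absurd h'' ht
    · linarith
  · have h' : s * (M 0 i * M 1 j - M 0 j * M 1 i) = 0 := by
      linear_combination M 1 j * hi - M 1 i * hj
    rcases mul_eq_zero.mp h' with h'' | h''
    · exact absurd h'' hs
    · linarith

lemma rank_le_one_of_minor (M : Matrix (Fin 2) (Fin 3) ℝ)
    (hm : ∀ i j : Fin 3, M 0 i * M 1 j = M 0 j * M 1 i) : M.rank ≤ 1 := by
  rw [Matrix.rank_eq_finrank_span_row]
  have key : ∃ u : Fin 3 → ℝ, Set.range M ⊆ (span ℝ {u} : Submodule ℝ (Fin 3 → ℝ)) := by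
    by_cases h0 : M 0 = 0
    · refine ⟨M 1, ?_⟩
      rintro v ⟨k, rfl⟩
      refine Fin.cases ?_ (fun l => by fin_cases l; exact mem_span_singleton_self _) k
      · rw [h0]; exact zero_mem _
    · obtain ⟨i, hi⟩ : ∃ i, M 0 i ≠ 0 := by
        by_contra hc; push_neg at hc; exact h0 (funext hc)
      refine ⟨M 0, ?_⟩
      rintro v ⟨k, rfl⟩
      refine Fin.cases (mem_span_singleton_self _) (fun l => ?_) k
      fin_cases l
      have h1 : M 1 = (M 1 i / M 0 i) • M 0 := by
        funext j
        simp only [Pi.smul_apply, smul_eq_mul]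
        field_simp
        linear_combination hm i j
      show M 1 ∈ _
      rw [h1]
      exact smul_mem _ _ (mem_span_singleton_self _)
  obtain ⟨u, hu⟩ := key
  calc Module.finrank ℝ (span ℝ (Set.range M))
      ≤ Module.finrank ℝ (span ℝ {u}) := Submodule.finrank_mono (span_le.mpr hu)
    _ ≤ 1 := by simpa using finrank_span_le_card ({u} : Set (Fin 3 → ℝ))

/-- For pairwise distinct `a b c` and `γ ≠ 0`, the set `R_{0,0,γ}`
is the z-axis together with two crossing lines, and the two crossing points on
the z-axis are distinct. -/
theorem stmt_5 (a b c γ : ℝ) (hab : a ≠ b) (hbc : b ≠ c) (hac : a ≠ c) (hγ : γ ≠ 0) :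
    ({p : ℝ × ℝ × ℝ |
        (!![2*a*p.1, 2*b*p.2.1, 2*c*p.2.2 + γ; p.1, p.2.1, p.2.2] :
          Matrix (Fin 2) (Fin 3) ℝ).rank ≤ 1} =
      {q : ℝ × ℝ × ℝ | ∃ z : ℝ, q = (0, 0, z)} ∪
      {q : ℝ × ℝ × ℝ | ∃ y : ℝ, q = (0, y, γ / (2*(b-c)))} ∪
      {q : ℝ × ℝ × ℝ | ∃ x : ℝ, q = (x, 0, γ / (2*(a-c)))}) ∧
    ((0, 0, γ / (2*(b-c))) : ℝ × ℝ × ℝ) ≠ (0, 0, γ / (2*(a-c))) := by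
  have hbc' : b - c ≠ 0 := sub_ne_zero.mpr hbc
  have hac' : a - c ≠ 0 := sub_ne_zero.mpr hac
  constructor
  · ext ⟨x, y, z⟩
    simp only [Set.mem_setOf_eq, Set.mem_union]
    constructor
    · intro h
      have h01 := minor_of_rank_le_one _ h 0 1
      have h02 := minor_of_rank_le_one _ h 0 2
      have h12 := minor_of_rank_le_one _ h 1 2
      simp only [Matrix.cons_val', Matrix.cons_val_zero, Matrix.cons_val_one,
        Matrix.head_cons, Matrix.head_fin_const, Matrix.cons_val_fin_one,
        Matrix.of_apply, Matrix.cons_val_two, Matrix.tail_cons] at h01 h02 h12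
      by_cases hx : x = 0
      · by_cases hy : y = 0
        · exact Or.inl (Or.inl ⟨z, by simp [hx, hy]⟩)
        · refine Or.inl (Or.inr ⟨y, ?_⟩)
          have hz : z = γ / (2*(b-c)) := by
            have h' : y * (2*(b-c)*z - γ) = 0 := by linear_combination h12
            rcases mul_eq_zero.mp h' with h'' | h''
            · exact absurd h'' hy
            · field_simp
              linarith
          simp [hx, hz]
      · have hy : y = 0 := by
          have h' : x * y * (2*(a-b)) = 0 := by linear_combination h01
          rcases mul_eq_zero.mp h' with h'' | h''
          · rcases mul_eq_zero.mp h'' with h3 | h3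
            · exact absurd h3 hx
            · exact h3
          · exact absurd h'' (by intro hc; apply hab; linarith)
        refine Or.inr ⟨x, ?_⟩
        have hz : z = γ / (2*(a-c)) := by
          have h' : x * (2*(a-c)*z - γ) = 0 := by linear_combination h02
          rcases mul_eq_zero.mp h' with h'' | h''
          · exact absurd h'' hx
          · field_simp
            linarith
        simp [hy, hz]
    · rintro ((⟨z', hz'⟩ | ⟨y', hy'⟩) | ⟨x', hx'⟩)
      · obtain ⟨rfl, rfl, rfl⟩ : x = 0 ∧ y = 0 ∧ z = z' := by
          simpa [Prod.ext_iff] using hz'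
        apply rank_le_one_of_minor
        intro i j
        fin_cases i <;> fin_cases j <;> simp
      · obtain ⟨rfl, rfl, rfl⟩ : x = 0 ∧ y = y' ∧ z = γ / (2*(b-c)) := by
          simpa [Prod.ext_iff] using hy'
        apply rank_le_one_of_minor
        intro i j
        fin_cases i <;> fin_cases j <;> simp <;> field_simp <;> ring
      · obtain ⟨rfl, rfl, rfl⟩ : x = x' ∧ y = 0 ∧ z = γ / (2*(a-c)) := by
          simpa [Prod.ext_iff] using hx'
        apply rank_le_one_of_minor
        intro i j
        fin_cases i <;> fin_cases j <;> simp <;> field_simp <;> ring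
  · intro hcontra
    have h : γ / (2*(b-c)) = γ / (2*(a-c)) := by
      simpa [Prod.ext_iff] using hcontra
    apply hab
    field_simp at h
    linarith
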